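/- Let A be an abelian category that is F-linear over a field F, in which every object has finite length, and in which every nonzero object has semisimple endomorphism-behavior in the sense that Hom-groups are finite dimensional and the Jacobson radical of every endomorphism ring is zero. Then A is semisimple: every short exact sequence splits. -/

import Mathlib

/-!
STATEMENT 4: Let `A` be an `F`-linear abelian category in which every object has finite
length (is both Noetherian and Artinian), all Hom-spaces are finite dimensional over the
field `F`, and the Jacobson radical of every endomorphism ring vanishes.  Then `A` is
semisimple: every short exact sequence splits.
-/

open CategoryTheory

universe v u

/-- A ring that is Artinian (as a left module over itself) whose Jacobson radical vanishes
is a semisimple ring. -/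
theorem aux_isSemisimpleRing_of_jacobson_bot {R : Type*} [Ring R] [IsArtinian R R]
    (h : (⊥ : Ideal R).jacobson = ⊥) : IsSemisimpleRing R := by
  classical
  obtain ⟨N, ⟨s, hs, rfl⟩, hmin⟩ := IsArtinian.set_has_minimal
    {I : Ideal R | ∃ t : Finset (Ideal R), (∀ J ∈ t, J.IsMaximal) ∧ I = t.inf id}
    ⟨⊤, ∅, by simp, by simp⟩
  -- the minimal finite intersection of maximal left ideals is contained in every maximal ideal
  have hle : ∀ m : Ideal R, m.IsMaximal → s.inf id ≤ m := by
    intro m hm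
    have hmem : (insert m s).inf id ∈
        {I : Ideal R | ∃ t : Finset (Ideal R), (∀ J ∈ t, J.IsMaximal) ∧ I = t.inf id} := by
      refine ⟨insert m s, ?_, rfl⟩
      intro J hJ
      rcases Finset.mem_insert.mp hJ with rfl | hJ
      · exact hm
      · exact hs J hJ
    have hle' : (insert m s).inf id ≤ s.inf id :=
      Finset.inf_mono (Finset.subset_insert m s)
    have heq : (insert m s).inf id = s.inf id :=
      hle'.lt_or_eq.resolve_left (hmin _ hmem)
    calc s.inf id = (insert m s).inf id := heq.symm
      _ ≤ id m := by rw [Finset.inf_insert]; exact inf_le_left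
  -- hence it is contained in the Jacobson radical, which is `⊥`
  have hbot : s.inf id = ⊥ := by
    rw [← le_bot_iff, ← h]
    exact le_sInf fun J hJ => hle J hJ.2
  -- each quotient `R ⧸ J` is a simple module
  have hsimple : ∀ J : s, IsSimpleModule R (R ⧸ (J : Ideal R)) := fun J =>
    isSimpleModule_iff_isCoatom.mpr (Ideal.isMaximal_def.mp (hs J J.2))
  -- the product of the quotients is a semisimple module
  have hss : IsSemisimpleModule R (∀ J : s, R ⧸ (J : Ideal R)) := by
    refine isSemisimpleModule_of_isSemisimpleModule_submodule'
      (p := fun i => LinearMap.range (LinearMap.single R (fun J : s => R ⧸ (J : Ideal R)) i))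
      (fun i => ?_) ?_
    · letI := hsimple i
      exact IsSemisimpleModule.range _
    · simp_rw [LinearMap.range_eq_map, Submodule.iSup_map_single, Submodule.pi_top]
  -- `R` embeds into this product
  let f : R →ₗ[R] ∀ J : s, R ⧸ (J : Ideal R) := LinearMap.pi fun J => (J : Ideal R).mkQ
  have hinj : Function.Injective f := by
    rw [← LinearMap.ker_eq_bot, eq_bot_iff]
    intro x hx
    rw [LinearMap.mem_ker] at hx
    have hx' : ∀ J : s, f x J = 0 := fun J => by rw [hx]; rfl
    have hmem : x ∈ s.inf id := by
      rw [Finset.inf_id_eq_sInf]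
      refine Submodule.mem_sInf.mpr fun J hJ => ?_
      have := hx' ⟨J, hJ⟩
      simpa [f, Submodule.Quotient.mk_eq_zero] using this
    rwa [hbot] at hmem
  haveI := hss
  exact IsSemisimpleModule.congr (M := ↥(LinearMap.range f))
    (LinearEquiv.ofInjective f hinj)

open CategoryTheory.Limits in
theorem semisimple_of_vanishing_jacobson_radical
    (F : Type*) [Field F]
    (A : Type u) [Category.{v} A] [Abelian A] [Linear F A]
    -- every object has finite length:
    [∀ X : A, IsNoetherianObject X] [∀ X : A, IsArtinianObject X]
    -- Hom-spaces are finite dimensional over F: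
    [∀ X Y : A, FiniteDimensional F (X ⟶ Y)]
    -- the Jacobson radical of every endomorphism ring is zero:
    (hrad : ∀ X : A, (⊥ : Ideal (End X)).jacobson = ⊥) :
    ∀ S : ShortComplex A, S.ShortExact → Nonempty S.Splitting := by
  intro S hS
  haveI : Epi S.g := hS.epi_g
  let Y : A := S.X₃ ⊞ S.X₂
  let p' : Y ⟶ S.X₃ := biprod.snd ≫ S.g
  haveI hp' : Epi p' := epi_comp _ _
  -- `End Y` is a semisimple ring
  letI : FiniteDimensional F (End Y) := inferInstanceAs (FiniteDimensional F (Y ⟶ Y))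
  haveI : IsArtinian (End Y) (End Y) := isArtinian_of_tower F inferInstance
  haveI : IsSemisimpleRing (End Y) := aux_isSemisimpleRing_of_jacobson_bot (hrad Y)
  -- the left ideal of all endomorphisms of `Y` factoring through `p'`
  let J : Ideal (End Y) :=
    { carrier := { f : End Y | ∃ v : S.X₃ ⟶ Y, f = End.of (p' ≫ v) }
      add_mem' := by
        rintro f g ⟨v, rfl⟩ ⟨w, rfl⟩
        exact ⟨v + w, by rw [Preadditive.comp_add]⟩
      zero_mem' := ⟨0, by rw [Limits.comp_zero]⟩
      smul_mem' := by
        rintro r f ⟨v, rfl⟩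
        refine ⟨v ≫ r, ?_⟩
        show r * End.of (p' ≫ v) = End.of (p' ≫ (v ≫ r))
        rw [End.mul_def]
        show (p' ≫ v) ≫ r = p' ≫ (v ≫ r)
        rw [Category.assoc] }
  obtain ⟨K, hK⟩ := exists_isCompl J
  have h1 : (1 : End Y) ∈ J ⊔ K := by rw [hK.sup_eq_top]; trivial
  obtain ⟨e, heJ, k, hkK, hek⟩ := Submodule.mem_sup.mp h1
  obtain ⟨v₀, rfl⟩ := heJ
  -- the element `f₀ = p' ≫ inl` of `J`
  set f₀ : End Y := End.of (p' ≫ biprod.inl) with hf₀def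
  have hf₀J : f₀ ∈ J := ⟨biprod.inl, rfl⟩
  -- `f₀ * e ∈ J` (this is `e ≫ f₀`):
  have heyJ : f₀ * End.of (p' ≫ v₀) ∈ J := by
    refine ⟨v₀ ≫ f₀, ?_⟩
    show f₀ * End.of (p' ≫ v₀) = End.of (p' ≫ (v₀ ≫ f₀))
    rw [End.mul_def]
    show (p' ≫ v₀) ≫ f₀ = p' ≫ (v₀ ≫ f₀)
    rw [Category.assoc]
  -- `f₀ * k ∈ K` (this is `k ≫ f₀`):
  have hkK' : f₀ * k ∈ K := by
    have := K.smul_mem f₀ hkK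
    rwa [smul_eq_mul] at this
  -- decomposition of `f₀`
  have hsum : f₀ * End.of (p' ≫ v₀) + f₀ * k = f₀ := by
    rw [← mul_add, hek, mul_one]
  have hdiff : f₀ - f₀ * End.of (p' ≫ v₀) ∈ J ⊓ K := by
    rw [Submodule.mem_inf]
    refine ⟨J.sub_mem hf₀J heyJ, ?_⟩
    have heq : f₀ - f₀ * End.of (p' ≫ v₀) = f₀ * k :=
      sub_eq_of_eq_add' hsum.symm
    rw [heq]; exact hkK'
  have hzero : f₀ - f₀ * End.of (p' ≫ v₀) = 0 := by
    rw [hK.inf_eq_bot] at hdiff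
    simpa using hdiff
  have key : f₀ * End.of (p' ≫ v₀) = f₀ := (sub_eq_zero.mp hzero).symm
  -- translate back to a statement about morphisms
  have key' : (p' ≫ v₀) ≫ (p' ≫ (biprod.inl : S.X₃ ⟶ Y)) = p' ≫ (biprod.inl : S.X₃ ⟶ Y) := by
    rw [End.mul_def] at key
    exact key
  have h3 : p' ≫ (v₀ ≫ p' ≫ (biprod.inl : S.X₃ ⟶ Y)) = p' ≫ (biprod.inl : S.X₃ ⟶ Y) := by
    rw [← Category.assoc]; exact key'
  have h4 : v₀ ≫ p' ≫ (biprod.inl : S.X₃ ⟶ Y) = biprod.inl := (cancel_epi p').mp h3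
  have key2 : v₀ ≫ p' = 𝟙 S.X₃ := by
    calc v₀ ≫ p' = (v₀ ≫ p' ≫ biprod.inl) ≫ biprod.fst := by
          simp [Category.assoc]
      _ = (biprod.inl : S.X₃ ⟶ Y) ≫ biprod.fst := by rw [h4]
      _ = 𝟙 S.X₃ := biprod.inl_fst
  refine ⟨ShortComplex.Splitting.ofExactOfSection S hS.exact (v₀ ≫ biprod.snd) ?_ hS.mono_f⟩
  rw [Category.assoc]
  exact key2
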